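/- (Proposition 1, existence) For every pure braid b ∈ P_n there exist c ∈ P_{n−1} and r ∈ R_n' such that b = ι(c) · r, where ι : B_{n−1} → B_n is the homomorphism sending each generator σ_i of B_{n−1} to the generator σ_i of B_n. In other words, every coset of R_n' in P_n contains a representative lying in the image of P_{n−1} under ι (a representative in which the n-th strand runs straight). -/

import Mathlib

namespace Braid

/-- Braid relations on generators indexed by `Fin m`; the generator `i : Fin m` stands for the
Artin generator `σ_{i+1}` of the braid group on `m+1` strands: the relations are
`σ_i σ_j = σ_j σ_i` for `|i-j| ≥ 2` and `σ_i σ_{i+1} σ_i = σ_{i+1} σ_i σ_{i+1}`. -/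
def braidRels (m : ℕ) : Set (FreeGroup (Fin m)) :=
  {r | ∃ i j : Fin m, i.val + 2 ≤ j.val ∧
      r = .of i * .of j * (.of j * .of i)⁻¹} ∪
  {r | ∃ (i : Fin m) (hij : i.val + 1 < m),
      r = .of i * .of ⟨i.val + 1, hij⟩ * .of i *
        (.of ⟨i.val + 1, hij⟩ * .of i * .of ⟨i.val + 1, hij⟩)⁻¹}

/-- The Artin braid group `B_n` on `n` strands, presented with generators `σ_1, …, σ_{n-1}`
and the braid relations. -/
def BraidGroup (n : ℕ) : Type := PresentedGroup (braidRels (n - 1))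

instance (n : ℕ) : Group (BraidGroup n) := by unfold BraidGroup; infer_instance

/-- The Artin generator `σ_i` of `B_n`, for `1 ≤ i ≤ n-1` (junk value `1` otherwise). -/
def σ (n : ℕ) (i : ℕ) : BraidGroup n :=
  if h : 1 ≤ i ∧ i ≤ n - 1 then PresentedGroup.of ⟨i - 1, by omega⟩ else 1

/-- The ascending product `σ_a σ_{a+1} ⋯ σ_b` (empty product if `b < a`). -/
def up (n a b : ℕ) : BraidGroup n := ((List.range' a (b + 1 - a)).map (σ n)).prod

/-- The descending product `σ_a σ_{a-1} ⋯ σ_b` (empty product if `a < b`). -/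
def down (n a b : ℕ) : BraidGroup n :=
  ((List.range' b (a + 1 - b)).reverse.map (σ n)).prod

/-- The full twist `d = (σ_{n-1} ⋯ σ_2 σ_1)^n` of `B_n`. -/
def fullTwist (n : ℕ) : BraidGroup n := (down n (n - 1) 1) ^ n

/-- The flip `r_i = σ_{i-1} ⋯ σ_2 σ_1^2 σ_2 ⋯ σ_{n-2} σ_{n-1}^2 σ_{n-2} ⋯ σ_i` of `B_n`
(for `1 ≤ i ≤ n`), written as `(σ_{i-1} ⋯ σ_1) (σ_1 ⋯ σ_{n-1}) (σ_{n-1} ⋯ σ_i)`. -/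
def flip (n i : ℕ) : BraidGroup n :=
  down n (i - 1) 1 * up n 1 (n - 1) * down n (n - 1) i

/-- The descending product of flips `r_a r_{a-1} ⋯ r_b` (empty product if `a < b`). -/
def flipsDown (n a b : ℕ) : BraidGroup n :=
  ((List.range' b (a + 1 - b)).reverse.map (flip n)).prod

/-- The subgroup `R_n ⊆ B_n` generated by the full twist `d` and the flips `r_1, …, r_n`. -/
def R (n : ℕ) : Subgroup (BraidGroup n) :=
  Subgroup.closure ({fullTwist n} ∪ flip n '' Set.Icc 1 n)

/-- The subgroup `R_n' ⊆ B_n` generated by the flips `r_1, …, r_n`. -/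
def R' (n : ℕ) : Subgroup (BraidGroup n) :=
  Subgroup.closure (flip n '' Set.Icc 1 n)

private lemma swap_braid {n : ℕ} (a b c : Fin n) (hab : a ≠ b) (hbc : b ≠ c) (hac : a ≠ c) :
    Equiv.swap a b * Equiv.swap b c * Equiv.swap a b
      = Equiv.swap b c * Equiv.swap a b * Equiv.swap b c := by
  have h1 : Equiv.swap b a * Equiv.swap c b * Equiv.swap b a = Equiv.swap a c :=
    Equiv.swap_mul_swap_mul_swap (Ne.symm hbc) hac.symm
  have h2 : Equiv.swap b c * Equiv.swap a b * Equiv.swap b c = Equiv.swap c a :=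
    Equiv.swap_mul_swap_mul_swap hab hac
  rw [h2, Equiv.swap_comm a b, Equiv.swap_comm b c, h1, Equiv.swap_comm a c]

private lemma swap_commute {n : ℕ} (a b c d : Fin n)
    (hac : a ≠ c) (had : a ≠ d) (hbc : b ≠ c) (hbd : b ≠ d) :
    Equiv.swap a b * Equiv.swap c d = Equiv.swap c d * Equiv.swap a b := by
  refine Equiv.Perm.Disjoint.commute ?_
  intro x
  by_cases h1 : x = a
  · subst h1; right; exact Equiv.swap_apply_of_ne_of_ne hac had
  · by_cases h2 : x = b
    · subst h2; right; exact Equiv.swap_apply_of_ne_of_ne hbc hbd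
    · left; exact Equiv.swap_apply_of_ne_of_ne h1 h2

/-- The transposition `(i, i+1)` of `Fin n` associated to the generator `i : Fin (n-1)`. -/
def permGen (n : ℕ) (i : Fin (n - 1)) : Equiv.Perm (Fin n) :=
  Equiv.swap ⟨i.val, by have := i.isLt; omega⟩ ⟨i.val + 1, by have := i.isLt; omega⟩

/-- The homomorphism `B_n → Sym(n)` sending `σ_i` to the transposition `(i, i+1)`. -/
def toPerm (n : ℕ) : BraidGroup n →* Equiv.Perm (Fin n) :=
  PresentedGroup.toGroup (f := permGen n)
    (by
      rintro r (⟨i, j, hij, rfl⟩ | ⟨i, hij, rfl⟩) <;>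
        simp only [map_mul, map_inv, FreeGroup.lift_apply_of, permGen] <;> rw [mul_inv_eq_one]
      · refine swap_commute _ _ _ _ ?_ ?_ ?_ ?_ <;>
          · rw [ne_eq, Fin.mk.injEq]; omega
      · refine swap_braid _ _ _ ?_ ?_ ?_ <;>
          · rw [ne_eq, Fin.mk.injEq]; omega)

/-- The pure braid group `P_n`: the kernel of `B_n → Sym(n)`, `σ_i ↦ (i, i+1)`. -/
def P (n : ℕ) : Subgroup (BraidGroup n) := (toPerm n).ker

private lemma mk_rel_eq_one {m : ℕ} {r : FreeGroup (Fin m)} (h : r ∈ braidRels m) :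
    PresentedGroup.mk (braidRels m) r = 1 :=
  (QuotientGroup.eq_one_iff _).mpr (Subgroup.subset_normalClosure h)

lemma σ_comm {n i j : ℕ} (h1 : 1 ≤ i) (h2 : i + 2 ≤ j) (h3 : j ≤ n - 1) :
    σ n i * σ n j = σ n j * σ n i := by
  have e1 : σ n i = (PresentedGroup.of (rels := braidRels (n - 1)) ⟨i - 1, by omega⟩ : BraidGroup n) :=
    dif_pos (⟨h1, by omega⟩ : 1 ≤ i ∧ i ≤ n - 1)
  have e2 : σ n j = (PresentedGroup.of (rels := braidRels (n - 1)) ⟨j - 1, by omega⟩ : BraidGroup n) :=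
    dif_pos (⟨by omega, h3⟩ : 1 ≤ j ∧ j ≤ n - 1)
  rw [e1, e2]
  have hmem : (FreeGroup.of (⟨i - 1, by omega⟩ : Fin (n-1)) * .of ⟨j - 1, by omega⟩ *
      (.of ⟨j - 1, by omega⟩ * .of ⟨i - 1, by omega⟩)⁻¹) ∈ braidRels (n - 1) :=
    Or.inl ⟨⟨i - 1, by omega⟩, ⟨j - 1, by omega⟩, by show i - 1 + 2 ≤ j - 1; omega, rfl⟩
  have h := mk_rel_eq_one hmem
  rw [map_mul, map_inv, mul_inv_eq_one, map_mul, map_mul] at h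
  exact h

set_option maxHeartbeats 1600000 in
lemma σ_braid {n i : ℕ} (h1 : 1 ≤ i) (h2 : i + 1 ≤ n - 1) :
    σ n i * σ n (i + 1) * σ n i = σ n (i + 1) * σ n i * σ n (i + 1) := by
  have e1 : σ n i = (PresentedGroup.of (rels := braidRels (n - 1)) ⟨i - 1, by omega⟩ : BraidGroup n) :=
    dif_pos (⟨h1, by omega⟩ : 1 ≤ i ∧ i ≤ n - 1)
  have key : (⟨i + 1 - 1, by omega⟩ : Fin (n - 1)) = ⟨(i - 1) + 1, by omega⟩ := by
    rw [Fin.mk.injEq]; omega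
  have e2 : σ n (i + 1) =
      (PresentedGroup.of (rels := braidRels (n - 1)) ⟨(i - 1) + 1, by omega⟩ : BraidGroup n) :=
    (dif_pos (⟨by omega, h2⟩ : 1 ≤ i + 1 ∧ i + 1 ≤ n - 1)).trans (congrArg PresentedGroup.of key)
  rw [e1, e2]
  have hmem : (FreeGroup.of (⟨i - 1, by omega⟩ : Fin (n-1)) * .of ⟨(i-1) + 1, by omega⟩ *
      .of ⟨i - 1, by omega⟩ *
      (.of ⟨(i-1) + 1, by omega⟩ * .of ⟨i - 1, by omega⟩ * .of ⟨(i-1)+1, by omega⟩)⁻¹)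
      ∈ braidRels (n - 1) :=
    Or.inr ⟨⟨i - 1, by omega⟩, by show i - 1 + 1 < n - 1; omega, rfl⟩
  have h := mk_rel_eq_one hmem
  rw [map_mul, map_inv, mul_inv_eq_one, map_mul, map_mul, map_mul, map_mul] at h
  exact h

/-- The canonical homomorphism `ι : B_{n-1} → B_n` determined by `σ_i ↦ σ_i`. -/
def ι (n : ℕ) : BraidGroup (n - 1) →* BraidGroup n :=
  PresentedGroup.toGroup (f := fun i : Fin (n - 1 - 1) => σ n (i.val + 1))
    (by
      rintro r (⟨i, j, hij, rfl⟩ | ⟨i, hij, rfl⟩) <;>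
        simp only [map_mul, map_inv, FreeGroup.lift_apply_of] <;> rw [mul_inv_eq_one]
      · exact σ_comm (by omega) (by omega) (by have := j.isLt; omega)
      · exact σ_braid (by omega) (by have := i.isLt; omega))


section Infra

variable {n : ℕ}

lemma σ_junk_zero : σ n 0 = 1 := by
  exact dif_neg (by omega)

lemma σ_junk_high {i : ℕ} (h : n - 1 < i) : σ n i = 1 := by
  exact dif_neg (by omega)

lemma up_empty {a b : ℕ} (h : b < a) : up n a b = 1 := by
  rw [up, show b + 1 - a = 0 by omega]; rfl

lemma down_empty {a b : ℕ} (h : a < b) : down n a b = 1 := by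
  rw [down, show a + 1 - b = 0 by omega]; rfl

lemma up_concat {a b : ℕ} (h : a ≤ b + 1) : up n a (b + 1) = up n a b * σ n (b + 1) := by
  rw [up, up, show b + 1 + 1 - a = (b + 1 - a) + 1 by omega, List.range'_concat,
    List.map_append, List.prod_append, show a + 1 * (b + 1 - a) = b + 1 by omega,
    List.map_singleton, List.prod_singleton]

lemma up_cons {a b : ℕ} (h : a ≤ b) : up n a b = σ n a * up n (a + 1) b := by
  rw [up, up, show b + 1 - a = (b + 1 - (a+1)) + 1 by omega, List.range'_succ,
    List.map_cons, List.prod_cons]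

lemma down_cons {a b : ℕ} (h : b ≤ a + 1) : down n (a + 1) b = σ n (a + 1) * down n a b := by
  rw [down, down, show a + 1 + 1 - b = (a + 1 - b) + 1 by omega, List.range'_concat,
    List.reverse_append, List.reverse_singleton, List.singleton_append, List.map_cons,
    List.prod_cons, show b + 1 * (a + 1 - b) = a + 1 by omega]

lemma down_concat {a b : ℕ} (h : b ≤ a) : down n a b = down n a (b + 1) * σ n b := by
  rw [down, down, show a + 1 - b = (a + 1 - (b + 1)) + 1 by omega, List.range'_succ,
    List.reverse_cons, List.map_append, List.prod_append, List.map_singleton,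
    List.prod_singleton]

lemma down_single {a : ℕ} : down n a a = σ n a := by
  rw [down_concat (le_refl a), down_empty (by omega), one_mul]

lemma up_single {a : ℕ} : up n a a = σ n a := by
  rw [up, show a + 1 - a = 1 by omega, List.range'_one, List.map_singleton,
    List.prod_singleton]

/-- commutation: σ_j commutes with σ_t when indices are ≥ 2 apart (incl. junk cases). -/
lemma σ_commute {j t : ℕ} (hj : 1 ≤ j) (hjn : j ≤ n - 1) (ht : 1 ≤ t) (htn : t ≤ n - 1)
    (h : j + 2 ≤ t ∨ t + 2 ≤ j) : Commute (σ n j) (σ n t) := by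
  rcases h with h | h
  · exact (σ_comm hj h htn)
  · exact (σ_comm ht h hjn).symm

lemma commute_σ_up {j a b : ℕ} (hj : 1 ≤ j) (hjn : j ≤ n - 1)
    (ha : 1 ≤ a) (hbn : b ≤ n - 1) (h : j + 2 ≤ a ∨ b + 2 ≤ j) :
    Commute (σ n j) (up n a b) := by
  apply Commute.list_prod_right
  intro x hx
  simp only [List.mem_map] at hx
  obtain ⟨t, ht, rfl⟩ := hx
  rw [List.mem_range'] at ht
  obtain ⟨i, hi, rfl⟩ := ht
  exact σ_commute hj hjn (by omega) (by omega) (by omega)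

lemma commute_σ_down {j a b : ℕ} (hj : 1 ≤ j) (hjn : j ≤ n - 1)
    (hb : 1 ≤ b) (han : a ≤ n - 1) (h : j + 2 ≤ b ∨ a + 2 ≤ j) :
    Commute (σ n j) (down n a b) := by
  apply Commute.list_prod_right
  intro x hx
  simp only [List.mem_map, List.mem_reverse] at hx
  obtain ⟨t, ht, rfl⟩ := hx
  rw [List.mem_range'] at ht
  obtain ⟨i, hi, rfl⟩ := ht
  exact σ_commute hj hjn (by omega) (by omega) (by omega)

lemma commute_down_down {a b a' b' : ℕ} (hb : 1 ≤ b) (han : a ≤ n - 1)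
    (hb' : 1 ≤ b') (han' : a' ≤ n - 1) (h : a + 2 ≤ b' ∨ a' + 2 ≤ b) :
    Commute (down n a b) (down n a' b') := by
  apply Commute.list_prod_left
  intro x hx
  simp only [List.mem_map, List.mem_reverse] at hx
  obtain ⟨t, ht, rfl⟩ := hx
  rw [List.mem_range'] at ht
  obtain ⟨i, hi, rfl⟩ := ht
  exact commute_σ_down (by omega) (by omega) hb' han' (by omega)

end Infra



section Slides

variable {n : ℕ}

/-- `up(a,b) σ_j = σ_{j+1} up(a,b)` for `a ≤ j < b ≤ n-1`. -/
lemma up_slide : ∀ {a b j : ℕ}, 1 ≤ a → a ≤ j → j < b → b ≤ n - 1 →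
    up n a b * σ n j = σ n (j + 1) * up n a b := by
  intro a b j h1 h2 h3 h4
  rcases Nat.eq_or_lt_of_le h2 with rfl | hlt
  · -- j = a
    have e1 : up n a b = σ n a * (σ n (a+1) * up n (a+2) b) := by
      rw [up_cons (by omega), up_cons (a := a+1) (by omega)]
    have hc : Commute (σ n a) (up n (a+2) b) :=
      commute_σ_up h1 (by omega) (by omega) h4 (by omega)
    rw [e1]
    calc (σ n a * (σ n (a+1) * up n (a+2) b)) * σ n a
        = σ n a * σ n (a+1) * (up n (a+2) b * σ n a) := by group
      _ = σ n a * σ n (a+1) * (σ n a * up n (a+2) b) := by rw [← hc.eq]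
      _ = σ n a * σ n (a+1) * σ n a * up n (a+2) b := by group
      _ = σ n (a+1) * σ n a * σ n (a+1) * up n (a+2) b := by
            rw [σ_braid h1 (by omega)]
      _ = σ n (a+1) * (σ n a * (σ n (a+1) * up n (a+2) b)) := by group
  · -- a < j
    have ih := up_slide (a := a + 1) (b := b) (j := j) (by omega) (by omega) h3 h4
    rw [up_cons (by omega : a ≤ b), mul_assoc, ih,
      ← mul_assoc, (σ_commute (by omega) (by omega) (by omega) (by omega) (by omega)).eq,
      mul_assoc]
termination_by a _ j => j - a

/-- `down(a,b) σ_{j+1} = σ_j down(a,b)` for `b ≤ j < a ≤ n-1`. -/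
lemma down_slide : ∀ {a b j : ℕ}, 1 ≤ b → b ≤ j → j < a → a ≤ n - 1 →
    down n a b * σ n (j + 1) = σ n j * down n a b := by
  intro a b j h1 h2 h3 h4
  rcases Nat.eq_or_lt_of_le h2 with rfl | hlt
  · -- j = b
    have e1 : down n a b = (down n a (b+2) * σ n (b+1)) * σ n b := by
      rw [← down_concat (by omega), ← down_concat (by omega)]
    have hc : Commute (σ n b) (down n a (b+2)) :=
      commute_σ_down h1 (by omega) (by omega) h4 (by omega)
    rw [e1]
    rw [show down n a (b+2) * σ n (b+1) * σ n b * σ n (b+1) =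
        down n a (b+2) * (σ n (b+1) * σ n b * σ n (b+1)) by group]
    rw [← σ_braid h1 (by omega)]
    have : down n a (b+2) * (σ n b * σ n (b+1) * σ n b) =
        σ n b * (down n a (b+2) * σ n (b+1) * σ n b) := by
      rw [show down n a (b+2) * (σ n b * σ n (b+1) * σ n b) =
          (down n a (b+2) * σ n b) * (σ n (b+1) * σ n b) by group, ← hc.eq]
      group
    rw [this]
  · -- b < j
    have ih := down_slide (a := a) (b := b + 1) (j := j) (by omega) (by omega) h3 h4
    rw [down_concat (by omega : b ≤ a), mul_assoc,
      ← ((σ_commute (j := j+1) (t := b) (by omega) (by omega) (by omega) (by omega)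
        (by omega))).eq,
      ← mul_assoc, ih, mul_assoc]
termination_by a b j => j - b

/-- shift: `U · down(a,b) = down(a+1,b+1) · U` where `U = σ_1⋯σ_{n-1}`. -/
lemma up_shift_down : ∀ {a b : ℕ}, 1 ≤ b → a ≤ n - 2 →
    up n 1 (n - 1) * down n a b = down n (a + 1) (b + 1) * up n 1 (n - 1) := by
  intro a b hb ha
  rcases lt_or_ge a b with h | h
  · rw [down_empty h, down_empty (by omega), mul_one, one_mul]
  · have ih := up_shift_down (a := a) (b := b + 1) (by omega) ha
    rw [down_concat h, ← mul_assoc, ih, mul_assoc,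
      up_slide (by omega) (by omega) (by omega) (by omega), ← mul_assoc,
      ← down_concat (by omega)]
termination_by a b => a + 1 - b
decreasing_by omega

end Slides



section CoreIdentities

variable {n : ℕ}

/-- C1: `σ_{i+1} · down(i,1)·down(i+1,2) = down(i,1)·down(i+1,2) · σ_1`. -/
lemma band_left : ∀ (i : ℕ), i + 1 ≤ n - 1 →
    σ n (i+1) * (down n i 1 * down n (i+1) 2) =
      down n i 1 * down n (i+1) 2 * σ n 1 := by
  intro i hi
  induction i with
  | zero =>
      rw [down_empty (by omega), down_empty (by omega)]; group
  | succ i ih =>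
      have hc : Commute (σ n (i+2)) (down n i 1) := by
        rcases Nat.eq_zero_or_pos i with rfl | hp
        · rw [down_empty (by omega)]; exact Commute.one_right _
        · exact commute_σ_down (by omega) (by omega) (by omega) (by omega) (by omega)
      have hb : σ n (i+1) * σ n (i+2) * σ n (i+1) = σ n (i+2) * σ n (i+1) * σ n (i+2) :=
        σ_braid (by omega) (by omega)
      have ihh := ih (by omega)
      rw [down_cons (a := i) (by omega), down_cons (a := i+1) (by omega)]
      calc σ n (i+1+1) * (σ n (i+1) * down n i 1 * (σ n (i+1+1) * down n (i+1) 2))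
          = σ n (i+2) * σ n (i+1) * ((down n i 1 * σ n (i+2)) * down n (i+1) 2) := by
            group
        _ = σ n (i+2) * σ n (i+1) * ((σ n (i+2) * down n i 1) * down n (i+1) 2) := by
            rw [← hc.eq]
        _ = σ n (i+2) * σ n (i+1) * σ n (i+2) * (down n i 1 * down n (i+1) 2) := by
            group
        _ = σ n (i+1) * σ n (i+2) * σ n (i+1) *
              (down n i 1 * down n (i+1) 2) := by rw [← hb]
        _ = σ n (i+1) * σ n (i+2) *
              (σ n (i+1) * (down n i 1 * down n (i+1) 2)) := by group
        _ = σ n (i+1) * σ n (i+2) * (down n i 1 * down n (i+1) 2 * σ n 1) := by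
            rw [ihh]
        _ = σ n (i+1) * ((σ n (i+2) * down n i 1) * down n (i+1) 2) * σ n 1 := by
            group
        _ = σ n (i+1) * ((down n i 1 * σ n (i+2)) * down n (i+1) 2) * σ n 1 := by
            rw [hc.eq]
        _ = σ n (i+1) * down n i 1 * (σ n (i+1+1) * down n (i+1) 2) * σ n 1 := by
            group

/-- C2: `σ_{n-1} · down(n-2,j)·down(n-1,j+1) = down(n-2,j)·down(n-1,j+1) · σ_j`. -/
lemma band_right : ∀ (j : ℕ), 1 ≤ j → j ≤ n - 1 →
    σ n (n-1) * (down n (n-2) j * down n (n-1) (j+1)) =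
      down n (n-2) j * down n (n-1) (j+1) * σ n j := by
  intro j h1 h2
  rcases Nat.eq_or_lt_of_le h2 with rfl | hlt
  · rw [down_empty (by omega), down_empty (by omega)]; group
  · have ih := band_right (j+1) (by omega) (by omega)
    rw [show j+1+1 = j+2 from rfl] at ih
    have hc : Commute (σ n j) (down n (n-1) (j+2)) := by
      rcases lt_or_ge (n-1) (j+2) with h | h
      · rw [down_empty h]; exact Commute.one_right _
      · exact commute_σ_down h1 (by omega) (by omega) (by omega) (by omega)
    have hb := σ_braid (n := n) (i := j) h1 (by omega)
    rw [down_concat (show j ≤ n-2 by omega), down_concat (show j+1 ≤ n-1 by omega)]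
    calc σ n (n-1) * (down n (n-2) (j+1) * σ n j * (down n (n-1) (j+1+1) * σ n (j+1)))
        = σ n (n-1) * (down n (n-2) (j+1) * ((σ n j * down n (n-1) (j+2)) * σ n (j+1)))
          := by group
      _ = σ n (n-1) * (down n (n-2) (j+1) * ((down n (n-1) (j+2) * σ n j) * σ n (j+1)))
          := by rw [hc.eq]
      _ = σ n (n-1) * (down n (n-2) (j+1) * down n (n-1) (j+2)) * (σ n j * σ n (j+1))
          := by group
      _ = down n (n-2) (j+1) * down n (n-1) (j+2) * σ n (j+1) * (σ n j * σ n (j+1))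
          := by rw [ih]
      _ = down n (n-2) (j+1) * down n (n-1) (j+2) * (σ n (j+1) * σ n j * σ n (j+1))
          := by group
      _ = down n (n-2) (j+1) * down n (n-1) (j+2) * (σ n j * σ n (j+1) * σ n j)
          := by rw [← hb]
      _ = down n (n-2) (j+1) * ((down n (n-1) (j+2) * σ n j) * σ n (j+1)) * σ n j
          := by group
      _ = down n (n-2) (j+1) * ((σ n j * down n (n-1) (j+2)) * σ n (j+1)) * σ n j
          := by rw [← hc.eq]
      _ = down n (n-2) (j+1) * σ n j * (down n (n-1) (j+1+1) * σ n (j+1)) * σ n j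
          := by group
termination_by j => n - 1 - j
decreasing_by omega

/-- C3: `σ_1 · up(1,a)² = up(1,a)² · σ_a`. -/
lemma square_shift : ∀ (i : ℕ), i + 1 ≤ n - 1 →
    σ n 1 * (up n 1 (i+1) * up n 1 (i+1)) = up n 1 (i+1) * up n 1 (i+1) * σ n (i+1) := by
  intro i hi
  induction i with
  | zero => rw [show (0:ℕ)+1 = 1 from rfl, up_single]; group
  | succ i ih =>
      have e2 : up n 1 (i+1) = up n 1 i * σ n (i+1) := by
        rcases Nat.eq_zero_or_pos i with rfl | hp
        · rw [show (0:ℕ)+1 = 1 from rfl, up_single,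
            up_empty (n := n) (a := 1) (b := 0) (by omega), one_mul]
        · exact up_concat (by omega)
      have hc : Commute (σ n (i+2)) (up n 1 i) := by
        rcases Nat.eq_zero_or_pos i with rfl | hp
        · rw [up_empty (by omega)]; exact Commute.one_right _
        · exact commute_σ_up (by omega) (by omega) (by omega) (by omega) (by omega)
      have hb : σ n (i+1) * σ n (i+2) * σ n (i+1) = σ n (i+2) * σ n (i+1) * σ n (i+2) :=
        σ_braid (by omega) (by omega)
      have ihh := ih (by omega)
      rw [up_concat (show 1 ≤ i+1+1 by omega)]
      calc σ n 1 * (up n 1 (i+1) * σ n (i+1+1) * (up n 1 (i+1) * σ n (i+1+1)))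
          = σ n 1 * (up n 1 (i+1) * ((σ n (i+2) * up n 1 (i+1)) * σ n (i+2))) := by
            group
        _ = σ n 1 * (up n 1 (i+1) * ((σ n (i+2) * (up n 1 i * σ n (i+1))) * σ n (i+2)))
            := by rw [← e2]
        _ = σ n 1 * (up n 1 (i+1) * ((σ n (i+2) * up n 1 i) *
              (σ n (i+1) * σ n (i+2)))) := by group
        _ = σ n 1 * (up n 1 (i+1) * ((up n 1 i * σ n (i+2)) *
              (σ n (i+1) * σ n (i+2)))) := by rw [hc.eq]
        _ = σ n 1 * (up n 1 (i+1) * up n 1 i * (σ n (i+2) * σ n (i+1) * σ n (i+2)))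
            := by group
        _ = σ n 1 * (up n 1 (i+1) * up n 1 i * (σ n (i+1) * σ n (i+2) * σ n (i+1)))
            := by rw [hb]
        _ = σ n 1 * (up n 1 (i+1) * (up n 1 i * σ n (i+1))) * (σ n (i+2) * σ n (i+1))
            := by group
        _ = σ n 1 * (up n 1 (i+1) * up n 1 (i+1)) * (σ n (i+2) * σ n (i+1)) := by
            rw [← e2]
        _ = up n 1 (i+1) * up n 1 (i+1) * σ n (i+1) * (σ n (i+2) * σ n (i+1)) := by
            rw [ihh]
        _ = up n 1 (i+1) * (up n 1 i * σ n (i+1)) * (σ n (i+1) * σ n (i+2) * σ n (i+1))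
            := by rw [← e2]; group
        _ = up n 1 (i+1) * (up n 1 i * σ n (i+1)) * (σ n (i+2) * σ n (i+1) * σ n (i+2))
            := by rw [hb]
        _ = up n 1 (i+1) * up n 1 i * ((σ n (i+1) * σ n (i+2) * σ n (i+1)) * σ n (i+2))
            := by group
        _ = up n 1 (i+1) * up n 1 i * ((σ n (i+2) * σ n (i+1) * σ n (i+2)) * σ n (i+2))
            := by rw [hb]
        _ = up n 1 (i+1) * ((up n 1 i * σ n (i+2)) * (σ n (i+1) * (σ n (i+2) * σ n (i+2))))
            := by group
        _ = up n 1 (i+1) * ((σ n (i+2) * up n 1 i) * (σ n (i+1) * (σ n (i+2) * σ n (i+2))))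
            := by rw [← hc.eq]
        _ = up n 1 (i+1) * σ n (i+2) * ((up n 1 i * σ n (i+1)) * (σ n (i+2) * σ n (i+2)))
            := by group
        _ = up n 1 (i+1) * σ n (i+2) * (up n 1 (i+1) * (σ n (i+2) * σ n (i+2))) := by
            rw [← e2]
        _ = up n 1 (i+1) * σ n (i+1+1) * (up n 1 (i+1) * σ n (i+1+1)) * σ n (i+1+1)
            := by group

/-- star-core: `down(n-2,k)·down(n-1,k+1)·σ_k² = σ_{n-1}·(down(n-1,k)·down(n-1,k+1))`. -/
lemma star_core : ∀ (k : ℕ), 1 ≤ k → k ≤ n - 1 →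
    down n (n-2) k * down n (n-1) (k+1) * (σ n k * σ n k) =
      σ n (n-1) * (down n (n-1) k * down n (n-1) (k+1)) := by
  intro k h1 h2
  rcases Nat.eq_or_lt_of_le h2 with rfl | hlt
  · rw [down_empty (show n-2 < n-1 by omega), down_empty (show n-1 < n-1+1 by omega),
      down_single]
    group
  · have ih := star_core (k+1) (by omega) (by omega)
    rw [show k+1+1 = k+2 from rfl] at ih
    have hc : Commute (σ n k) (down n (n-1) (k+2)) := by
      rcases lt_or_ge (n-1) (k+2) with h | h
      · rw [down_empty h]; exact Commute.one_right _
      · exact commute_σ_down h1 (by omega) (by omega) (by omega) (by omega)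
    have hb : σ n k * σ n (k+1) * σ n k = σ n (k+1) * σ n k * σ n (k+1) :=
      σ_braid h1 (by omega)
    have e2 : down n (n-1) (k+1) = down n (n-1) (k+2) * σ n (k+1) :=
      down_concat (by omega)
    have e3 : down n (n-1) k = down n (n-1) (k+1) * σ n k := down_concat (by omega)
    rw [down_concat (show k ≤ n-2 by omega)]
    nth_rewrite 1 [e2]
    calc down n (n-2) (k+1) * σ n k * (down n (n-1) (k+2) * σ n (k+1)) * (σ n k * σ n k)
        = down n (n-2) (k+1) * ((σ n k * down n (n-1) (k+2)) *
            (σ n (k+1) * σ n k * σ n k)) := by group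
      _ = down n (n-2) (k+1) * ((down n (n-1) (k+2) * σ n k) *
            (σ n (k+1) * σ n k * σ n k)) := by rw [hc.eq]
      _ = down n (n-2) (k+1) * down n (n-1) (k+2) *
            ((σ n k * σ n (k+1) * σ n k) * σ n k) := by group
      _ = down n (n-2) (k+1) * down n (n-1) (k+2) *
            ((σ n (k+1) * σ n k * σ n (k+1)) * σ n k) := by rw [hb]
      _ = down n (n-2) (k+1) * down n (n-1) (k+2) *
            (σ n (k+1) * (σ n k * σ n (k+1) * σ n k)) := by group
      _ = down n (n-2) (k+1) * down n (n-1) (k+2) *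
            (σ n (k+1) * (σ n (k+1) * σ n k * σ n (k+1))) := by rw [hb]
      _ = down n (n-2) (k+1) * down n (n-1) (k+2) * (σ n (k+1) * σ n (k+1)) *
            (σ n k * σ n (k+1)) := by group
      _ = σ n (n-1) * (down n (n-1) (k+1) * down n (n-1) (k+2)) *
            (σ n k * σ n (k+1)) := by rw [ih]
      _ = σ n (n-1) * (down n (n-1) (k+1) * ((down n (n-1) (k+2) * σ n k) *
            σ n (k+1))) := by group
      _ = σ n (n-1) * (down n (n-1) (k+1) * ((σ n k * down n (n-1) (k+2)) *
            σ n (k+1))) := by rw [← hc.eq]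
      _ = σ n (n-1) * ((down n (n-1) (k+1) * σ n k) *
            (down n (n-1) (k+2) * σ n (k+1))) := by group
      _ = σ n (n-1) * (down n (n-1) k * down n (n-1) (k+1)) := by rw [← e2, ← e3]
termination_by k => n - 1 - k
decreasing_by omega

end CoreIdentities


section FlipConj

variable {n : ℕ}

/-- N2: `σ_{j+1} · r_{j+1} = r_{j+2} · σ_{j+1}`. -/
lemma flip_slide (j : ℕ) (h : j + 1 ≤ n - 1) :
    σ n (j+1) * flip n (j+1) = flip n (j+2) * σ n (j+1) := by
  rw [flip, flip, show j+1-1 = j from rfl, show j+2-1 = j+1 from rfl,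
    down_cons (a := j) (by omega), down_concat (show j+1 ≤ n-1 by omega)]
  group

/-- N1 (case `i ≤ j`): `σ_{j+1}` commutes with `r_i` for `i ≤ j`. -/
lemma flip_comm_lt (i j : ℕ) (h1 : 1 ≤ i) (hij : i ≤ j) (hj : j + 1 ≤ n - 1) :
    σ n (j+1) * flip n i = flip n i * σ n (j+1) := by
  have hc : Commute (σ n (j+1)) (down n (i-1) 1) := by
    rcases Nat.eq_or_lt_of_le h1 with rfl | hi
    · rw [down_empty (by omega)]; exact Commute.one_right _
    · exact commute_σ_down (by omega) (by omega) (by omega) (by omega) (by omega)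
  have hu : σ n (j+1) * up n 1 (n-1) = up n 1 (n-1) * σ n j :=
    (up_slide (by omega) (by omega) (by omega) (by omega)).symm
  have hd : σ n j * down n (n-1) i = down n (n-1) i * σ n (j+1) :=
    (down_slide (by omega) (by omega) (by omega) (by omega)).symm
  rw [flip]
  calc σ n (j+1) * (down n (i-1) 1 * up n 1 (n-1) * down n (n-1) i)
      = (σ n (j+1) * down n (i-1) 1) * up n 1 (n-1) * down n (n-1) i := by group
    _ = down n (i-1) 1 * (σ n (j+1) * up n 1 (n-1)) * down n (n-1) i := by
        rw [hc.eq]; group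
    _ = down n (i-1) 1 * up n 1 (n-1) * (σ n j * down n (n-1) i) := by
        rw [hu]; group
    _ = down n (i-1) 1 * up n 1 (n-1) * down n (n-1) i * σ n (j+1) := by
        rw [hd]; group

/-- N1 (case `i ≥ j+2`): `σ_j` commutes with `r_i` for `j+2 ≤ i ≤ n`. -/
lemma flip_comm_gt (i j : ℕ) (h1 : 1 ≤ j) (hij : j + 2 ≤ i) (hi : i ≤ n) :
    σ n j * flip n i = flip n i * σ n j := by
  have hc : Commute (σ n j) (down n (n-1) i) :=
    commute_σ_down h1 (by omega) (by omega) (by omega) (Or.inl (by omega))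
  have hv : σ n j * down n (i-1) 1 = down n (i-1) 1 * σ n (j+1) :=
    (down_slide (by omega) (by omega) (by omega) (by omega)).symm
  have hu : σ n (j+1) * up n 1 (n-1) = up n 1 (n-1) * σ n j := by
    have := up_slide (n := n) (a := 1) (b := n-1) (j := j) (by omega) (by omega)
      (by omega) (by omega)
    exact this.symm
  rw [flip]
  calc σ n j * (down n (i-1) 1 * up n 1 (n-1) * down n (n-1) i)
      = (σ n j * down n (i-1) 1) * up n 1 (n-1) * down n (n-1) i := by group
    _ = down n (i-1) 1 * (σ n (j+1) * up n 1 (n-1)) * down n (n-1) i := by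
        rw [hv]; group
    _ = down n (i-1) 1 * up n 1 (n-1) * (σ n j * down n (n-1) i) := by
        rw [hu]; group
    _ = down n (i-1) 1 * up n 1 (n-1) * down n (n-1) i * σ n j := by
        rw [hc.eq]; group

/-- The half-flip `Q_j = r_{j+1} σ_{j+1}^{-1}`. -/
private def halfQ (n j : ℕ) : BraidGroup n :=
  down n j 1 * up n 1 (n-1) * down n (n-1) (j+2)

lemma flip_eq_halfQ_mul (j : ℕ) (h : j + 1 ≤ n - 1) :
    flip n (j+1) = halfQ n j * σ n (j+1) := by
  rw [flip, halfQ, show j+1-1 = j from rfl, down_concat (show j+1 ≤ n-1 by omega)]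
  group

lemma flip_eq_mul_halfQ (j : ℕ) (h : j + 1 ≤ n - 1) :
    flip n (j+2) = σ n (j+1) * halfQ n j := by
  rw [flip, halfQ, show j+2-1 = j+1 from rfl, down_cons (a := j) (by omega)]
  group

/-- σ_{j+1} commutes with `Q_j²`. -/
lemma σ_comm_QQ (hn : 3 ≤ n) (j : ℕ) (h : j + 1 ≤ n - 1) :
    σ n (j+1) * (halfQ n j * halfQ n j) = (halfQ n j * halfQ n j) * σ n (j+1) := by
  have hdd : Commute (down n (n-1) (j+2)) (down n j 1) := by
    rcases Nat.eq_zero_or_pos j with rfl | hp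
    · rw [down_empty (a := 0) (by omega)]; exact Commute.one_right _
    · exact commute_down_down (by omega) (by omega) (by omega) (by omega) (by omega)
  have h1 : up n 1 (n-1) * down n j 1 = down n (j+1) 2 * up n 1 (n-1) := by
    rcases Nat.eq_zero_or_pos j with rfl | hp
    · rw [down_empty (a := 0) (by omega), down_empty (by omega), mul_one, one_mul]
    · exact up_shift_down (by omega) (by omega)
  have h2 : down n (n-1) (j+2) * up n 1 (n-1) = up n 1 (n-1) * down n (n-2) (j+1) := by
    have := up_shift_down (n := n) (a := n-2) (b := j+1) (by omega) (by omega)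
    rw [show n-2+1 = n-1 by omega] at this
    exact this.symm
  have hQQ : halfQ n j * halfQ n j =
      down n j 1 * down n (j+1) 2 * (up n 1 (n-1) * up n 1 (n-1)) *
        (down n (n-2) (j+1) * down n (n-1) (j+2)) := by
    rw [halfQ]
    calc down n j 1 * up n 1 (n-1) * down n (n-1) (j+2) *
          (down n j 1 * up n 1 (n-1) * down n (n-1) (j+2))
        = down n j 1 * up n 1 (n-1) * ((down n (n-1) (j+2) * down n j 1) *
            (up n 1 (n-1) * down n (n-1) (j+2))) := by group
      _ = down n j 1 * ((up n 1 (n-1) * down n j 1) *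
            ((down n (n-1) (j+2) * up n 1 (n-1)) * down n (n-1) (j+2))) := by
          rw [hdd.eq]; group
      _ = down n j 1 * ((down n (j+1) 2 * up n 1 (n-1)) *
            ((up n 1 (n-1) * down n (n-2) (j+1)) * down n (n-1) (j+2))) := by
          rw [h1, h2]
      _ = down n j 1 * down n (j+1) 2 * (up n 1 (n-1) * up n 1 (n-1)) *
            (down n (n-2) (j+1) * down n (n-1) (j+2)) := by group
  have hL := band_left (n := n) j (by omega)
  have hU : σ n 1 * (up n 1 (n-1) * up n 1 (n-1)) =
      up n 1 (n-1) * up n 1 (n-1) * σ n (n-1) := by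
    have := square_shift (n := n) (n-2) (by omega)
    rw [show n-2+1 = n-1 by omega] at this
    exact this
  have hR : σ n (n-1) * (down n (n-2) (j+1) * down n (n-1) (j+2)) =
      down n (n-2) (j+1) * down n (n-1) (j+2) * σ n (j+1) := by
    have := band_right (n := n) (j+1) (by omega) (by omega)
    rw [show j+1+1 = j+2 from rfl] at this
    exact this
  rw [hQQ]
  calc σ n (j+1) * (down n j 1 * down n (j+1) 2 * (up n 1 (n-1) * up n 1 (n-1)) *
        (down n (n-2) (j+1) * down n (n-1) (j+2)))
      = (σ n (j+1) * (down n j 1 * down n (j+1) 2)) * (up n 1 (n-1) * up n 1 (n-1)) *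
        (down n (n-2) (j+1) * down n (n-1) (j+2)) := by group
    _ = (down n j 1 * down n (j+1) 2) * (σ n 1 * (up n 1 (n-1) * up n 1 (n-1))) *
        (down n (n-2) (j+1) * down n (n-1) (j+2)) := by rw [hL]; group
    _ = (down n j 1 * down n (j+1) 2) * (up n 1 (n-1) * up n 1 (n-1)) *
        (σ n (n-1) * (down n (n-2) (j+1) * down n (n-1) (j+2))) := by rw [hU]; group
    _ = (down n j 1 * down n (j+1) 2) * (up n 1 (n-1) * up n 1 (n-1)) *
        (down n (n-2) (j+1) * down n (n-1) (j+2)) * σ n (j+1) := by rw [hR]; group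

/-- conj1: `σ_{j+1} r_{j+1} σ_{j+1}⁻¹ = r_{j+2}`. -/
lemma conj_flip₁ (j : ℕ) (h : j + 1 ≤ n - 1) :
    σ n (j+1) * flip n (j+1) * (σ n (j+1))⁻¹ = flip n (j+2) := by
  rw [flip_slide j h]; group

/-- conj2: `σ_{j+1}⁻¹ r_{j+2} σ_{j+1} = r_{j+1}`. -/
lemma conj_flip₂ (j : ℕ) (h : j + 1 ≤ n - 1) :
    (σ n (j+1))⁻¹ * flip n (j+2) * σ n (j+1) = flip n (j+1) := by
  rw [← conj_flip₁ j h]; group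

/-- conj3: `σ_{j+1} r_{j+2} σ_{j+1}⁻¹ = r_{j+2} r_{j+1} r_{j+2}⁻¹`. -/
lemma conj_flip₃ (hn : 3 ≤ n) (j : ℕ) (h : j + 1 ≤ n - 1) :
    σ n (j+1) * flip n (j+2) * (σ n (j+1))⁻¹ =
      flip n (j+2) * flip n (j+1) * (flip n (j+2))⁻¹ := by
  have hq := σ_comm_QQ hn j h
  rw [flip_eq_mul_halfQ j h, flip_eq_halfQ_mul j h]
  calc σ n (j+1) * (σ n (j+1) * halfQ n j) * (σ n (j+1))⁻¹
      = σ n (j+1) * σ n (j+1) * (halfQ n j * halfQ n j) * (halfQ n j)⁻¹ *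
          (σ n (j+1))⁻¹ := by group
    _ = σ n (j+1) * ((halfQ n j * halfQ n j) * σ n (j+1)) * (halfQ n j)⁻¹ *
          (σ n (j+1))⁻¹ := by rw [← hq]; group
    _ = σ n (j+1) * halfQ n j * (halfQ n j * σ n (j+1)) *
          (σ n (j+1) * halfQ n j)⁻¹ := by group

/-- conj4: `σ_{j+1}⁻¹ r_{j+1} σ_{j+1} = r_{j+1}⁻¹ r_{j+2} r_{j+1}`. -/
lemma conj_flip₄ (hn : 3 ≤ n) (j : ℕ) (h : j + 1 ≤ n - 1) :
    (σ n (j+1))⁻¹ * flip n (j+1) * σ n (j+1) =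
      (flip n (j+1))⁻¹ * flip n (j+2) * flip n (j+1) := by
  have hq := σ_comm_QQ hn j h
  rw [flip_eq_mul_halfQ j h, flip_eq_halfQ_mul j h]
  have key : (halfQ n j * σ n (j+1))⁻¹ * (σ n (j+1) * halfQ n j) *
      (halfQ n j * σ n (j+1)) = (σ n (j+1))⁻¹ * (halfQ n j * σ n (j+1)) * σ n (j+1) := by
    calc (halfQ n j * σ n (j+1))⁻¹ * (σ n (j+1) * halfQ n j) *
        (halfQ n j * σ n (j+1))
        = (halfQ n j * σ n (j+1))⁻¹ * ((σ n (j+1) * (halfQ n j * halfQ n j)) *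
            σ n (j+1)) := by group
      _ = (halfQ n j * σ n (j+1))⁻¹ * ((halfQ n j * halfQ n j * σ n (j+1)) *
            σ n (j+1)) := by rw [hq]
      _ = (σ n (j+1))⁻¹ * (halfQ n j * σ n (j+1)) * σ n (j+1) := by group
  exact key.symm

end FlipConj


section IotaLemmas

variable {n : ℕ}

lemma ι_σ (hn : 3 ≤ n) {i : ℕ} (h1 : 1 ≤ i) (h2 : i ≤ n - 2) :
    ι n (σ (n-1) i) = σ n i := by
  rw [show σ (n-1) i = PresentedGroup.of ⟨i - 1, by omega⟩ from
    dif_pos ⟨h1, by omega⟩]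
  show PresentedGroup.toGroup _ (PresentedGroup.of _) = _
  rw [PresentedGroup.toGroup.of]
  congr 1
  simp only [Fin.val_mk]
  omega

lemma ι_up (hn : 3 ≤ n) {a b : ℕ} (h1 : 1 ≤ a) (h2 : b ≤ n - 2) :
    ι n (up (n-1) a b) = up n a b := by
  rw [up, up, map_list_prod, List.map_map]
  congr 1
  apply List.map_congr_left
  intro t ht
  rw [List.mem_range'] at ht
  obtain ⟨i, hi, rfl⟩ := ht
  exact ι_σ hn (by omega) (by omega)

lemma ι_down (hn : 3 ≤ n) {a b : ℕ} (h1 : 1 ≤ b) (h2 : a ≤ n - 2) :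
    ι n (down (n-1) a b) = down n a b := by
  rw [down, down, map_list_prod, List.map_map]
  congr 1
  apply List.map_congr_left
  intro t ht
  rw [List.mem_reverse, List.mem_range'] at ht
  obtain ⟨i, hi, rfl⟩ := ht
  exact ι_σ hn (by omega) (by omega)

lemma ι_flip (hn : 3 ≤ n) {k : ℕ} (h1 : 1 ≤ k) (h2 : k ≤ n - 1) :
    ι n (flip (n-1) k) = down n (k-1) 1 * up n 1 (n-2) * down n (n-2) k := by
  rw [flip, show n-1-1 = n-2 by omega, map_mul, map_mul,
    ι_down hn (by omega) (by omega), ι_up hn (by omega) (by omega),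
    ι_down hn (by omega) (by omega)]

/-- the band generator `A_k = τ_{k+1} σ_k² τ_{k+1}⁻¹` factors as `ι(r_k^{(n-1)})⁻¹ · r_k`. -/
lemma band_factor (hn : 3 ≤ n) {k : ℕ} (h1 : 1 ≤ k) (h2 : k ≤ n - 1) :
    down n (n-1) (k+1) * (σ n k * σ n k) * (down n (n-1) (k+1))⁻¹ =
      (ι n (flip (n-1) k))⁻¹ * flip n k := by
  have hstar := star_core (n := n) k h1 h2
  have hup : up n 1 (n-1) = up n 1 (n-2) * σ n (n-1) := by
    have := up_concat (n := n) (a := 1) (b := n-2) (by omega)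
    rw [show n-2+1 = n-1 by omega] at this
    exact this
  have hkey : ι n (flip (n-1) k) * (down n (n-1) (k+1) * (σ n k * σ n k) *
      (down n (n-1) (k+1))⁻¹) = flip n k := by
    rw [ι_flip hn h1 h2, flip]
    calc down n (k-1) 1 * up n 1 (n-2) * down n (n-2) k *
          (down n (n-1) (k+1) * (σ n k * σ n k) * (down n (n-1) (k+1))⁻¹)
        = down n (k-1) 1 * up n 1 (n-2) *
            (down n (n-2) k * down n (n-1) (k+1) * (σ n k * σ n k)) *
            (down n (n-1) (k+1))⁻¹ := by group
      _ = down n (k-1) 1 * up n 1 (n-2) *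
            (σ n (n-1) * (down n (n-1) k * down n (n-1) (k+1))) *
            (down n (n-1) (k+1))⁻¹ := by rw [hstar]
      _ = down n (k-1) 1 * (up n 1 (n-2) * σ n (n-1)) * down n (n-1) k := by group
      _ = down n (k-1) 1 * up n 1 (n-1) * down n (n-1) k := by rw [← hup]
  calc down n (n-1) (k+1) * (σ n k * σ n k) * (down n (n-1) (k+1))⁻¹
      = (ι n (flip (n-1) k))⁻¹ * (ι n (flip (n-1) k) *
          (down n (n-1) (k+1) * (σ n k * σ n k) * (down n (n-1) (k+1))⁻¹)) := by group
    _ = (ι n (flip (n-1) k))⁻¹ * flip n k := by rw [hkey]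

end IotaLemmas


section PermLemmas

variable {n : ℕ}

lemma toPerm_σ {i : ℕ} (h1 : 1 ≤ i) (h2 : i ≤ n - 1) :
    toPerm n (σ n i) =
      Equiv.swap ⟨i - 1, by omega⟩ ⟨i, by omega⟩ := by
  rw [show σ n i = PresentedGroup.of ⟨i - 1, by omega⟩ from dif_pos ⟨h1, h2⟩]
  show PresentedGroup.toGroup _ (PresentedGroup.of _) = _
  rw [PresentedGroup.toGroup.of, permGen]
  congr 1 <;> · simp only [Fin.mk.injEq, Fin.val_mk]; omega

lemma σ_junk {i : ℕ} (h : ¬(1 ≤ i ∧ i ≤ n - 1)) : σ n i = 1 := dif_neg h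

lemma toPerm_σ_sq (i : ℕ) : toPerm n (σ n i) * toPerm n (σ n i) = 1 := by
  by_cases h : 1 ≤ i ∧ i ≤ n - 1
  · rw [toPerm_σ h.1 h.2, Equiv.swap_mul_self]
  · rw [σ_junk h, map_one, mul_one]

lemma perm_tele : ∀ a b : ℕ, toPerm n (down n a b * up n b a) = 1 := by
  intro a b
  rcases lt_or_ge a b with h | h
  · rw [down_empty h, up_empty h, mul_one, map_one]
  · have ih := perm_tele a (b + 1)
    rw [down_concat h, up_cons h]
    rw [show down n a (b+1) * σ n b * (σ n b * up n (b+1) a) =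
      down n a (b+1) * (σ n b * σ n b) * up n (b+1) a by group]
    rw [map_mul, map_mul, map_mul, toPerm_σ_sq, mul_one, ← map_mul, ih]
termination_by a b => a + 1 - b
decreasing_by omega

lemma perm_updown : ∀ b i : ℕ, 1 ≤ i → i ≤ b + 1 →
    toPerm n (up n 1 b) * toPerm n (down n b i) = toPerm n (up n 1 (i-1)) := by
  intro b i h1 h2
  rcases Nat.eq_or_lt_of_le h2 with he | hlt
  · rw [down_empty (by omega), map_one, mul_one, show i - 1 = b by omega]
  · have hb : 1 ≤ b := by omega
    obtain ⟨b', rfl⟩ : ∃ b', b = b' + 1 := ⟨b - 1, by omega⟩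
    have ih := perm_updown b' i h1 (by omega)
    rw [up_concat (by omega), down_cons (by omega), map_mul, map_mul]
    rw [show toPerm n (up n 1 b') * toPerm n (σ n (b'+1)) *
      (toPerm n (σ n (b'+1)) * toPerm n (down n b' i)) =
      toPerm n (up n 1 b') * (toPerm n (σ n (b'+1)) * toPerm n (σ n (b'+1))) *
        toPerm n (down n b' i) by group]
    rw [toPerm_σ_sq, mul_one, ih]
termination_by b i => b

lemma flip_perm {i : ℕ} (h1 : 1 ≤ i) (h2 : i ≤ n) : toPerm n (flip n i) = 1 := by
  rw [flip, map_mul, map_mul, mul_assoc, perm_updown (n-1) i h1 (by omega),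
    ← map_mul]
  exact perm_tele (i-1) 1

lemma R'_le_ker (hn : 3 ≤ n) : R' n ≤ (toPerm n).ker := by
  rw [R', Subgroup.closure_le]
  rintro x ⟨i, hi, rfl⟩
  simp only [Set.mem_Icc] at hi
  simp only [SetLike.mem_coe, MonoidHom.mem_ker]
  exact flip_perm hi.1 hi.2

end PermLemmas


section LastStrand

variable {n : ℕ}

lemma σ_fix_last (hn : 3 ≤ n) {i : ℕ} (h2 : i ≤ n - 2) :
    toPerm n (σ n i) ⟨n-1, by omega⟩ = ⟨n-1, by omega⟩ := by
  rcases Nat.eq_zero_or_pos i with rfl | h1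
  · rw [σ_junk (by omega), map_one]; rfl
  · rw [toPerm_σ h1 (by omega)]
    apply Equiv.swap_apply_of_ne_of_ne <;> · simp only [ne_eq, Fin.mk.injEq]; omega

lemma σ_move_last (hn : 3 ≤ n) :
    toPerm n (σ n (n-1)) ⟨n-1, by omega⟩ = ⟨n-2, by omega⟩ := by
  rw [toPerm_σ (by omega) le_rfl]
  have := Equiv.swap_apply_right (⟨n-1-1, by omega⟩ : Fin n) ⟨n-1, by omega⟩
  rw [this]
  simp only [Fin.mk.injEq]; omega

lemma tau_move_last (hn : 3 ≤ n) : ∀ k : ℕ, 1 ≤ k → k ≤ n - 1 →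
    toPerm n (down n (n-1) k) ⟨n-1, by omega⟩ = ⟨n-2, by omega⟩ := by
  intro k h1 h2
  rcases Nat.eq_or_lt_of_le h2 with rfl | hlt
  · rw [down_single]
    exact σ_move_last hn
  · have ih := tau_move_last hn (k+1) (by omega) (by omega)
    rw [down_concat (show k ≤ n-1 by omega), map_mul, Equiv.Perm.mul_apply,
      σ_fix_last hn (by omega), ih]
termination_by k => n - 1 - k
decreasing_by omega

lemma viaEmbedding_swap {α β : Type*} [DecidableEq α] [DecidableEq β]
    (e : α ↪ β) (a b : α) :
    Equiv.Perm.viaEmbedding (Equiv.swap a b) e = Equiv.swap (e a) (e b) := by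
  ext x
  rcases em (∃ y, e y = x) with ⟨y, rfl⟩ | hx
  · rw [Equiv.Perm.viaEmbedding_apply]
    rcases eq_or_ne y a with rfl | hya
    · rw [Equiv.swap_apply_left, Equiv.swap_apply_left]
    rcases eq_or_ne y b with rfl | hyb
    · rw [Equiv.swap_apply_right, Equiv.swap_apply_right]
    · rw [Equiv.swap_apply_of_ne_of_ne hya hyb,
        Equiv.swap_apply_of_ne_of_ne (e.injective.ne hya) (e.injective.ne hyb)]
  · have hx' : x ∉ Set.range e := by simp only [Set.mem_range]; exact hx
    rw [Equiv.Perm.viaEmbedding_apply_of_notMem _ _ x hx',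
      Equiv.swap_apply_of_ne_of_ne (fun h => hx ⟨a, h.symm⟩) (fun h => hx ⟨b, h.symm⟩)]

/-- the embedding `Fin (n-1) ↪ Fin n`. -/
private def finEmb (n : ℕ) : Fin (n-1) ↪ Fin n :=
  ⟨Fin.castLE (by omega), Fin.castLE_injective _⟩

end LastStrand


section GenInduction

variable {n : ℕ}

lemma of_eq_σ (i : Fin (n-1)) :
    (PresentedGroup.of i : BraidGroup n) = σ n (i.val + 1) := by
  have hi := i.isLt
  rw [show σ n (i.val+1) = PresentedGroup.of ⟨i.val + 1 - 1, by omega⟩ from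
    dif_pos ⟨by omega, by omega⟩]
  rfl

/-- induction over all of `B_n` by right-multiplication structure. -/
lemma generator_induction {C : BraidGroup n → Prop}
    (h1 : C 1) (hmul : ∀ a b, C a → C b → C (a * b))
    (hgen : ∀ i : Fin (n-1), C (PresentedGroup.of i))
    (hinv : ∀ i : Fin (n-1), C ((PresentedGroup.of i : BraidGroup n)⁻¹)) :
    ∀ g, C g := by
  intro g
  let T : Submonoid (BraidGroup n) :=
    { carrier := setOf C
      one_mem' := h1
      mul_mem' := fun {a b} ha hb => hmul a b ha hb }
  have hX : (Set.range (PresentedGroup.of : Fin (n-1) → BraidGroup n)) ∪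
      (Set.range (PresentedGroup.of : Fin (n-1) → BraidGroup n))⁻¹ ⊆
      (T : Set (BraidGroup n)) := by
    rintro x (⟨i, rfl⟩ | hx)
    · exact hgen i
    · obtain ⟨i, hi⟩ := Set.mem_inv.mp hx
      have : x = (PresentedGroup.of i : BraidGroup n)⁻¹ := by
        rw [hi]; simp
      rw [this]; exact hinv i
  have hclos := Subgroup.closure_toSubmonoid
    (Set.range (PresentedGroup.of : Fin (n-1) → BraidGroup n))
  have htop : Subgroup.closure
      (Set.range (PresentedGroup.of : Fin (n-1) → BraidGroup n)) = ⊤ :=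
    PresentedGroup.closure_range_of _
  have hg : g ∈ (Subgroup.closure
      (Set.range (PresentedGroup.of : Fin (n-1) → BraidGroup n))).toSubmonoid := by
    rw [htop]; trivial
  rw [hclos] at hg
  exact (Submonoid.closure_le.mpr hX) hg

/-- `R'ₙ` is a normal subgroup of `Bₙ`. -/
lemma R'_normal (hn : 3 ≤ n) : (R' n).Normal := by
  constructor
  intro h hmem g
  revert h
  have key : ∀ g : BraidGroup n, (∀ h ∈ R' n, g * h * g⁻¹ ∈ R' n) := by
    apply generator_induction
    · intro h hh; simpa using hh
    · intro a b ha hb h hh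
      have := ha (b * h * b⁻¹) (hb h hh)
      rw [show a * (b * h * b⁻¹) * a⁻¹ = a * b * h * (a * b)⁻¹ by group] at this
      exact this
    · intro i
      -- conjugation by σ_{i+1}
      have hi := i.isLt
      rw [of_eq_σ i]
      intro h hh
      refine Subgroup.closure_induction ?_ ?_ ?_ ?_ hh
      · rintro x ⟨m, hm, rfl⟩
        simp only [Set.mem_Icc] at hm
        rcases lt_trichotomy m (i.val + 1) with hlt | rfl | hgt
        · -- m ≤ j - 1 : commute
          have := flip_comm_lt (n := n) m i.val hm.1 (by omega) (by omega)
          rw [show σ n (i.val+1) * flip n m * (σ n (i.val+1))⁻¹ = flip n m from by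
            rw [this]; group]
          exact Subgroup.subset_closure ⟨m, Set.mem_Icc.mpr hm, rfl⟩
        · -- m = j
          rw [conj_flip₁ i.val (by omega)]
          exact Subgroup.subset_closure ⟨i.val+2, Set.mem_Icc.mpr ⟨by omega, by omega⟩, rfl⟩
        · rcases Nat.eq_or_lt_of_le hgt with he | hgt2
          · -- m = j + 1
            have hm2 : m = i.val + 2 := by omega
            subst hm2
            rw [conj_flip₃ hn i.val (by omega)]
            have r1 : flip n (i.val+2) ∈ R' n :=
              Subgroup.subset_closure ⟨i.val+2, Set.mem_Icc.mpr ⟨by omega, by omega⟩, rfl⟩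
            have r2 : flip n (i.val+1) ∈ R' n :=
              Subgroup.subset_closure ⟨i.val+1, Set.mem_Icc.mpr ⟨by omega, by omega⟩, rfl⟩
            exact Subgroup.mul_mem _ (Subgroup.mul_mem _ r1 r2) (Subgroup.inv_mem _ r1)
          · -- m ≥ j + 2 : commute
            have := flip_comm_gt (n := n) m (i.val+1) (by omega) (by omega) (by omega)
            rw [show σ n (i.val+1) * flip n m * (σ n (i.val+1))⁻¹ = flip n m from by
              rw [this]; group]
            exact Subgroup.subset_closure ⟨m, Set.mem_Icc.mpr hm, rfl⟩
      · simpa using Subgroup.one_mem (R' n)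
      · intro x y _ _ hx hy
        have := Subgroup.mul_mem _ hx hy
        rw [show σ n (i.val+1) * x * (σ n (i.val+1))⁻¹ * (σ n (i.val+1) * y *
          (σ n (i.val+1))⁻¹) = σ n (i.val+1) * (x*y) * (σ n (i.val+1))⁻¹ by group] at this
        exact this
      · intro x _ hx
        have := Subgroup.inv_mem _ hx
        rw [show (σ n (i.val+1) * x * (σ n (i.val+1))⁻¹)⁻¹ =
          σ n (i.val+1) * x⁻¹ * (σ n (i.val+1))⁻¹ by group] at this
        exact this
    · intro i
      have hi := i.isLt
      rw [of_eq_σ i]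
      intro h hh
      refine Subgroup.closure_induction ?_ ?_ ?_ ?_ hh
      · rintro x ⟨m, hm, rfl⟩
        simp only [Set.mem_Icc] at hm
        rcases lt_trichotomy m (i.val+1) with hlt | rfl | hgt
        · have hcm : Commute (σ n (i.val+1)) (flip n m) :=
            flip_comm_lt (n := n) m i.val hm.1 (by omega) (by omega)
          rw [show (σ n (i.val+1))⁻¹ * flip n m * ((σ n (i.val+1))⁻¹)⁻¹ = flip n m from by
            rw [hcm.inv_left.eq]; group]
          exact Subgroup.subset_closure ⟨m, Set.mem_Icc.mpr hm, rfl⟩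
        · rw [show (σ n (i.val+1))⁻¹ * flip n (i.val+1) * ((σ n (i.val+1))⁻¹)⁻¹ =
            (σ n (i.val+1))⁻¹ * flip n (i.val+1) * σ n (i.val+1) by group,
            conj_flip₄ hn i.val (by omega)]
          have r1 : flip n (i.val+2) ∈ R' n :=
            Subgroup.subset_closure ⟨i.val+2, Set.mem_Icc.mpr ⟨by omega, by omega⟩, rfl⟩
          have r2 : flip n (i.val+1) ∈ R' n :=
            Subgroup.subset_closure ⟨i.val+1, Set.mem_Icc.mpr ⟨by omega, by omega⟩, rfl⟩
          exact Subgroup.mul_mem _ (Subgroup.mul_mem _ (Subgroup.inv_mem _ r2) r1) r2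
        · rcases Nat.eq_or_lt_of_le hgt with he | hgt2
          · have hm2 : m = i.val + 2 := by omega
            subst hm2
            rw [show (σ n (i.val+1))⁻¹ * flip n (i.val+2) * ((σ n (i.val+1))⁻¹)⁻¹ =
              (σ n (i.val+1))⁻¹ * flip n (i.val+2) * σ n (i.val+1) by group,
              conj_flip₂ i.val (by omega)]
            exact Subgroup.subset_closure ⟨i.val+1, Set.mem_Icc.mpr ⟨by omega, by omega⟩, rfl⟩
          · have hcm : Commute (σ n (i.val+1)) (flip n m) :=
              flip_comm_gt (n := n) m (i.val+1) (by omega) (by omega) (by omega)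
            rw [show (σ n (i.val+1))⁻¹ * flip n m * ((σ n (i.val+1))⁻¹)⁻¹ = flip n m from by
              rw [hcm.inv_left.eq]; group]
            exact Subgroup.subset_closure ⟨m, Set.mem_Icc.mpr hm, rfl⟩
      · simpa using Subgroup.one_mem (R' n)
      · intro x y _ _ hx hy
        have := Subgroup.mul_mem _ hx hy
        rw [show (σ n (i.val+1))⁻¹ * x * ((σ n (i.val+1))⁻¹)⁻¹ * ((σ n (i.val+1))⁻¹ * y *
          ((σ n (i.val+1))⁻¹)⁻¹) = (σ n (i.val+1))⁻¹ * (x*y) * ((σ n (i.val+1))⁻¹)⁻¹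
          by group] at this
        exact this
      · intro x _ hx
        have := Subgroup.inv_mem _ hx
        rw [show ((σ n (i.val+1))⁻¹ * x * ((σ n (i.val+1))⁻¹)⁻¹)⁻¹ =
          (σ n (i.val+1))⁻¹ * x⁻¹ * ((σ n (i.val+1))⁻¹)⁻¹ by group] at this
        exact this
  intro h hh
  exact key g h hh

end GenInduction


section Final

variable {n : ℕ}

lemma square_gen (hn : 3 ≤ n) (x : Fin (n-1-1)) :
    toPerm n (ι n (PresentedGroup.of x)) =
      Equiv.Perm.viaEmbeddingHom (finEmb n) (toPerm (n-1) (PresentedGroup.of x)) := by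
  have hx := x.isLt
  have e1 : ι n (PresentedGroup.of x) = σ n (x.val + 1) := by
    show PresentedGroup.toGroup _ (PresentedGroup.of _) = _
    rw [PresentedGroup.toGroup.of]
  have e2 : toPerm (n-1) (PresentedGroup.of x) = permGen (n-1) x := by
    show PresentedGroup.toGroup _ (PresentedGroup.of _) = _
    rw [PresentedGroup.toGroup.of]
  rw [e1, e2, toPerm_σ (by omega) (by omega), permGen,
    Equiv.Perm.viaEmbeddingHom_apply, viaEmbedding_swap]
  congr 1 <;> · apply Fin.ext; simp [finEmb]

lemma toPerm_ι_square (hn : 3 ≤ n) : ∀ c : BraidGroup (n-1),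
    toPerm n (ι n c) =
      Equiv.Perm.viaEmbeddingHom (finEmb n) (toPerm (n-1) c) := by
  apply generator_induction
  · simp
  · intro a b ha hb
    rw [map_mul, map_mul, ha, hb, map_mul, map_mul]
  · intro i; exact square_gen hn i
  · intro i
    have h := congrArg (fun p => p⁻¹) (square_gen hn i)
    exact ((congrArg (toPerm n) (map_inv (ι n) _)).trans (map_inv (toPerm n) _)).trans
      (h.trans ((congrArg (Equiv.Perm.viaEmbeddingHom (finEmb n))
        (map_inv (toPerm (n-1)) _)).trans (map_inv _ _)).symm)

lemma ι_fix_last (hn : 3 ≤ n) (c : BraidGroup (n-1)) :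
    toPerm n (ι n c) ⟨n-1, by omega⟩ = ⟨n-1, by omega⟩ := by
  rw [toPerm_ι_square hn c, Equiv.Perm.viaEmbeddingHom_apply,
    Equiv.Perm.viaEmbedding_apply_of_notMem]
  rintro ⟨y, hy⟩
  have hy' := congrArg Fin.val hy
  have : (finEmb n y).val = y.val := rfl
  rw [this] at hy'
  have := y.isLt
  simp only [Fin.val_mk] at hy'
  omega

lemma ι_pure (hn : 3 ≤ n) (c : BraidGroup (n-1)) (h : toPerm n (ι n c) = 1) :
    toPerm (n-1) c = 1 := by
  rw [toPerm_ι_square hn c] at h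
  apply Equiv.Perm.viaEmbeddingHom_injective (finEmb n)
  rw [h, map_one]

lemma right_mul_induction {S : BraidGroup n → Prop} (hS1 : S 1)
    (hgen : ∀ (b : BraidGroup n), S b → ∀ i : Fin (n-1), S (b * σ n (i.val+1)))
    (hinv : ∀ (b : BraidGroup n), S b → ∀ i : Fin (n-1),
      S (b * (σ n (i.val+1))⁻¹)) : ∀ b, S b := by
  have key : ∀ g : BraidGroup n, ∀ b, S b → S (b * g) := by
    apply generator_induction (C := fun g => ∀ b, S b → S (b * g))
    · intro b hb; simpa using hb
    · intro a c ha hc b hb; rw [← mul_assoc]; exact hc _ (ha _ hb)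
    · intro i b hb; rw [of_eq_σ i]; exact hgen b hb i
    · intro i b hb; rw [of_eq_σ i]; exact hinv b hb i
  intro b
  simpa using key b 1 hS1

lemma σ_mem_J (hn : 3 ≤ n) {j : ℕ} (h1 : 1 ≤ j) (h2 : j ≤ n - 2) :
    σ n j ∈ (ι n).range ⊔ R' n :=
  Subgroup.mem_sup_left (MonoidHom.mem_range.mpr ⟨σ (n-1) j, ι_σ hn h1 h2⟩)

lemma flip_mem_J {m : ℕ} (h1 : 1 ≤ m) (h2 : m ≤ n) :
    flip n m ∈ (ι n).range ⊔ R' n :=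
  Subgroup.mem_sup_right (Subgroup.subset_closure ⟨m, Set.mem_Icc.mpr ⟨h1, h2⟩, rfl⟩)

lemma A_mem_J (hn : 3 ≤ n) {k : ℕ} (h1 : 1 ≤ k) (h2 : k ≤ n - 1) :
    down n (n-1) (k+1) * (σ n k * σ n k) * (down n (n-1) (k+1))⁻¹ ∈
      (ι n).range ⊔ R' n := by
  rw [band_factor hn h1 h2]
  exact Subgroup.mul_mem _
    (Subgroup.inv_mem _ (Subgroup.mem_sup_left (MonoidHom.mem_range.mpr
      ⟨flip (n-1) k, rfl⟩)))
    (flip_mem_J h1 (by omega))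

lemma sweep (hn : 3 ≤ n) : ∀ b : BraidGroup n,
    ∃ g ∈ ((ι n).range ⊔ R' n : Subgroup (BraidGroup n)),
      ∃ k, 1 ≤ k ∧ k ≤ n ∧ b = g * down n (n-1) k := by
  apply right_mul_induction
  · exact ⟨1, Subgroup.one_mem _, n, by omega, by omega, by
      rw [down_empty (by omega), one_mul]⟩
  · rintro b ⟨g, hg, k, hk1, hk2, rfl⟩ i
    have hi := i.isLt
    generalize hjdef : i.val + 1 = j
    have hj1 : 1 ≤ j := by omega
    have hj2 : j ≤ n - 1 := by omega
    rcases lt_or_ge (j+1) k with hc1 | h'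
    · -- j + 2 ≤ k : commute
      have hcm : Commute (σ n j) (down n (n-1) k) :=
        commute_σ_down hj1 hj2 (by omega) (by omega) (Or.inl (by omega))
      refine ⟨g * σ n j, Subgroup.mul_mem _ hg (σ_mem_J hn hj1 (by omega)), k, hk1, hk2, ?_⟩
      rw [mul_assoc, ← hcm.eq, mul_assoc]
    · rcases eq_or_lt_of_le h' with he | h''
      · -- k = j + 1
        refine ⟨g, hg, j, hj1, by omega, ?_⟩
        rw [he, mul_assoc, ← down_concat (show j ≤ n-1 by omega)]
      · rcases eq_or_lt_of_le (Nat.lt_succ_iff.mp h'') with he2 | h3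
        · -- k = j
          subst he2
          refine ⟨g * (down n (n-1) (k+1) * (σ n k * σ n k) * (down n (n-1) (k+1))⁻¹),
            Subgroup.mul_mem _ hg (A_mem_J hn hj1 hj2), k+1, by omega, by omega, ?_⟩
          rw [down_concat (show k ≤ n-1 by omega)]
          group
        · -- k < j : slide
          obtain ⟨j', rfl⟩ : ∃ j', j = j' + 1 := ⟨j - 1, by omega⟩
          have hs := down_slide (n := n) (a := n-1) (b := k) (j := j')
            (by omega) (by omega) (by omega) (by omega)
          refine ⟨g * σ n j', Subgroup.mul_mem _ hg (σ_mem_J hn (by omega) (by omega)),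
            k, hk1, hk2, ?_⟩
          rw [mul_assoc, hs, mul_assoc]
  · rintro b ⟨g, hg, k, hk1, hk2, rfl⟩ i
    have hi := i.isLt
    generalize hjdef : i.val + 1 = j
    have hj1 : 1 ≤ j := by omega
    have hj2 : j ≤ n - 1 := by omega
    rcases lt_or_ge (j+1) k with hc1 | h'
    · -- j + 2 ≤ k : commute
      have hcm : Commute (σ n j) (down n (n-1) k) :=
        commute_σ_down hj1 hj2 (by omega) (by omega) (Or.inl (by omega))
      refine ⟨g * (σ n j)⁻¹, Subgroup.mul_mem _ hg
        (Subgroup.inv_mem _ (σ_mem_J hn hj1 (by omega))), k, hk1, hk2, ?_⟩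
      rw [mul_assoc, ← hcm.inv_left.eq, mul_assoc]
    · rcases eq_or_lt_of_le h' with he | h''
      · -- k = j + 1 : A⁻¹ move
        refine ⟨g * (down n (n-1) (j+1) * (σ n j * σ n j) * (down n (n-1) (j+1))⁻¹)⁻¹,
          Subgroup.mul_mem _ hg (Subgroup.inv_mem _ (A_mem_J hn hj1 hj2)),
          j, hj1, by omega, ?_⟩
        rw [he, show down n (n-1) j = down n (n-1) (j+1) * σ n j from
          down_concat (by omega)]
        group
      · rcases eq_or_lt_of_le (Nat.lt_succ_iff.mp h'') with he2 | h3
        · -- k = j : cancel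
          subst he2
          refine ⟨g, hg, k+1, by omega, by omega, ?_⟩
          rw [show down n (n-1) k = down n (n-1) (k+1) * σ n k from
            down_concat (by omega)]
          group
        · -- k < j : slide
          obtain ⟨j', rfl⟩ : ∃ j', j = j' + 1 := ⟨j - 1, by omega⟩
          have hs := down_slide (n := n) (a := n-1) (b := k) (j := j')
            (by omega) (by omega) (by omega) (by omega)
          refine ⟨g * (σ n j')⁻¹, Subgroup.mul_mem _ hg
            (Subgroup.inv_mem _ (σ_mem_J hn (by omega) (by omega))), k, hk1, hk2, ?_⟩
          have : down n (n-1) k * (σ n (j'+1))⁻¹ = (σ n j')⁻¹ * down n (n-1) k := by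
            calc down n (n-1) k * (σ n (j'+1))⁻¹
                = (σ n j')⁻¹ * ((σ n j' * down n (n-1) k) * (σ n (j'+1))⁻¹) := by group
              _ = (σ n j')⁻¹ * ((down n (n-1) k * σ n (j'+1)) * (σ n (j'+1))⁻¹) := by
                  rw [hs]
              _ = (σ n j')⁻¹ * down n (n-1) k := by group
          rw [mul_assoc, this, mul_assoc]

open scoped Pointwise in
lemma J_factor {n : ℕ} (hn : 3 ≤ n) {g : BraidGroup n}
    (hg : g ∈ (ι n).range ⊔ R' n) : ∃ c, ∃ r ∈ R' n, g = ι n c * r := by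
  haveI := R'_normal hn
  have hset : g ∈ ((ι n).range : Set (BraidGroup n)) * (R' n : Set (BraidGroup n)) := by
    rw [← Subgroup.mul_normal]
    exact hg
  obtain ⟨x, hx, r, hr, hxr⟩ := hset
  obtain ⟨c, rfl⟩ := MonoidHom.mem_range.mp hx
  exact ⟨c, r, hr, hxr.symm⟩

end Final

/-- Proposition 1 (existence): every coset of `R_n'` in `P_n` contains a representative in
which the `n`-th strand runs straight: for every `b ∈ P_n` there are `c ∈ P_{n-1}` and
`r ∈ R_n'` with `b = ι(c) · r`. -/
theorem exists_straight_representative (n : ℕ) (hn : 3 ≤ n) :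
    ∀ b ∈ P n, ∃ c ∈ P (n - 1), ∃ r ∈ R' n, b = ι n c * r := by
  intro b hb
  obtain ⟨g, hg, k, hk1, hk2, hbe⟩ := sweep hn b
  obtain ⟨c, r, hr, hgf⟩ := J_factor hn hg
  rw [hgf] at hbe
  have hbp : toPerm n b = 1 := hb
  rw [hbe, map_mul, map_mul, R'_le_ker hn hr, mul_one] at hbp
  -- show k = n
  have hkn : k = n := by
    by_contra hne
    have hk2' : k ≤ n - 1 := by omega
    have h1 := congrArg (fun p => p (⟨n-1, by omega⟩ : Fin n)) hbp
    simp only [Equiv.Perm.mul_apply, Equiv.Perm.one_apply] at h1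
    rw [tau_move_last hn k hk1 hk2'] at h1
    have h2 := ι_fix_last hn c
    have := (toPerm n (ι n c)).injective (h1.trans h2.symm)
    simp only [Fin.mk.injEq] at this
    omega
  rw [hkn] at hbe hbp
  rw [down_empty (by omega), mul_one] at hbe
  have hcp : toPerm n (ι n c) = 1 := by
    rw [down_empty (by omega), map_one, mul_one] at hbp
    exact hbp
  refine ⟨c, ?_, r, hr, hbe⟩
  exact ι_pure hn c hcp

end Braid
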